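/- Let l < 0 < u and W ∈ ℝ, and define the LiRPA propagation through one unstable ReLU: if W ≥ 0, set D = α (for any fixed α ∈ [0,1]) and b = 0; if W < 0, set D = u/(u-l) and b = -u·l/(u-l). Then for all h ∈ [l,u], W·D·h + W·b ≤ W·max(h,0). -/

import Mathlib

theorem lirpa_single_relu_backward_sound (l u W α : ℝ) (hl : l < 0) (hu : 0 < u)
    (hα0 : 0 ≤ α) (hα1 : α ≤ 1) :
    ∀ h ∈ Set.Icc l u,
      W * ((if 0 ≤ W then α else u / (u - l)) * h) +
        W * (if 0 ≤ W then 0 else -(u * l) / (u - l)) ≤ W * max h 0 := by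
  intro h hh
  obtain ⟨hhl, hhu⟩ := hh
  have hd : (0:ℝ) < u - l := by linarith
  by_cases hW : 0 ≤ W
  · simp only [if_pos hW, mul_zero, add_zero]
    have : α * h ≤ max h 0 := by
      rcases le_or_gt 0 h with h0 | h0
      · exact le_trans (by nlinarith) (le_max_left h 0)
      · exact le_trans (by nlinarith) (le_max_right h 0)
    nlinarith [mul_le_mul_of_nonneg_left this hW]
  · simp only [if_neg hW]
    have hline : max h 0 ≤ u / (u - l) * h + -(u * l) / (u - l) := by
      rw [div_mul_eq_mul_div, ← add_div, le_div_iff₀ hd]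
      rcases le_or_gt 0 h with h0 | h0
      · rw [max_eq_left h0]; nlinarith
      · rw [max_eq_right h0.le]; nlinarith
    have hWn : W ≤ 0 := le_of_not_ge hW
    nlinarith [mul_le_mul_of_nonpos_left hline hWn]
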